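/- Let C and D be nonempty finite subsets of a set Z with |C| ≥ |D|. Then Σ_{z∈Z} | 1_C(z)/|C| − 1_D(z)/|D| | ≤ 2·|C Δ D|/|D|, where 1_C and 1_D are the indicator functions of C and D. -/

import Mathlib

open Function Metric ENNReal

noncomputable section

/-- `ℓ¹(S)`: real-valued functions on `S` with finite `ℓ¹`-norm, with the `ℓ¹` metric. -/
abbrev ellOne (S : Type u) : Type u := lp (fun _ : S => ℝ) 1

/-- The full simplex `Δ(S) ⊆ ℓ¹(S)`. -/
def fullSimplex (S : Type u) : Set (ellOne S) :=
  {p | (∀ s, 0 ≤ p s) ∧ (support (p : S → ℝ)).Finite ∧ ∑' s, p s = 1}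

/-- The `n`-skeleton `Δ(S)^(n)` of the full simplex. -/
def skeleton (S : Type u) (n : ℕ) : Set (ellOne S) :=
  {p ∈ fullSimplex S | (support (p : S → ℝ)).encard ≤ n + 1}

/-- A simplicial complex on `S`: a subset of `Δ(S)` closed under passing to
points whose support is contained in the support of a member. -/
def IsSimplicialComplex {S : Type u} (K : Set (ellOne S)) : Prop :=
  K ⊆ fullSimplex S ∧
    ∀ p ∈ K, ∀ q ∈ fullSimplex S,
      support (q : S → ℝ) ⊆ support (p : S → ℝ) → q ∈ K

/-- The star of a vertex `v` in `K`. -/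
def star {S : Type u} (K : Set (ellOne S)) (v : S) : Set (ellOne S) :=
  {p ∈ K | 0 < p v}

/-- `f` is `(λ, C)`-Lipschitz. -/
def IsLipschitzLC {X Y : Type*} [MetricSpace X] [MetricSpace Y]
    (l C : ℝ) (f : X → Y) : Prop :=
  ∀ x y, dist (f x) (f y) ≤ l * dist x y + C

/-- A family of sets is uniformly bounded. -/
def UniformlyBounded {X : Type*} [MetricSpace X] {ι : Type*} (U : ι → Set X) : Prop :=
  ∃ M : ℝ, ∀ i, ∀ x ∈ U i, ∀ y ∈ U i, dist x y ≤ M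

/-- `U` is a cover of the whole space. -/
def IsCover {X : Type*} {ι : Type*} (U : ι → Set X) : Prop := ∀ x, ∃ i, x ∈ U i

/-- The Lebesgue number `inf_x sup_i dist(x, X∖Uᵢ)` of a family, as a value in `ℝ≥0∞`. -/
def lebesgue {X : Type*} [MetricSpace X] {ι : Type*} (U : ι → Set X) : ℝ≥0∞ :=
  ⨅ x : X, ⨆ i, EMetric.infEdist x (U i)ᶜ

/-- The multiplicity of `U` is at most `m`. -/
def MultiplicityLE {X : Type*} [MetricSpace X] {ι : Type*} (U : ι → Set X) (m : ℕ) : Prop :=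
  ∀ x : X, {i | 0 < Metric.infDist x ((U i)ᶜ)}.encard ≤ m

/-- `f : X → K` is a `δ`-partition of unity. -/
def IsDeltaPartitionOfUnity {X : Type*} [MetricSpace X] {S : Type u}
    (δ : ℝ) (K : Set (ellOne S)) (f : X → ellOne S) : Prop :=
  (∀ x, f x ∈ K) ∧ IsLipschitzLC δ δ f ∧
    UniformlyBounded (fun v : S => f ⁻¹' star K v) ∧
    ENNReal.ofReal (1 / δ) ≤ lebesgue (fun v : S => f ⁻¹' star K v)

/-- `X` is large scale paracompact. -/
def LSParacompact (X : Type u) [MetricSpace X] : Prop :=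
  ∀ (ι : Type u) (U : ι → Set X), IsCover U → UniformlyBounded U →
    ∀ l C : ℝ, 0 < l → 0 < C →
      ∃ (S : Type u) (K : Set (ellOne S)) (f : X → ellOne S),
        IsSimplicialComplex K ∧ (∀ x, f x ∈ K) ∧ IsLipschitzLC l C f ∧
        UniformlyBounded (fun v : S => f ⁻¹' star K v) ∧
        ∀ i, ∃ v : S, U i ⊆ f ⁻¹' star K v

/-- `X` has asymptotic dimension at most `n`. -/
def AsdimLE (X : Type u) [MetricSpace X] (n : ℕ) : Prop :=
  ∀ R : ℝ, 0 < R → ∃ (ι : Type u) (U : ι → Set X),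
    IsCover U ∧ UniformlyBounded U ∧ MultiplicityLE U (n + 1) ∧
    ENNReal.ofReal R ≤ lebesgue U

/-- `X` has Property A. -/
def PropertyA (X : Type u) [MetricSpace X] : Prop :=
  ∀ R ε : ℝ, 0 < R → 0 < ε →
    ∃ (M : ℝ) (S : Type u) (φ : S → X → ℝ), 0 < M ∧
      (∀ s x, 0 ≤ φ s x ∧ φ s x ≤ 1) ∧
      (∀ x, (support fun s => φ s x).Finite) ∧
      (∀ x, ∑' s, φ s x = 1) ∧
      (∀ x y, dist x y ≤ R → ∑' s, |φ s x - φ s y| < ε) ∧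
      (∀ s, ∀ x ∈ support (φ s), ∀ y ∈ support (φ s), dist x y ≤ M)

/-- `f` has `(R, ε)` variation. -/
def HasVariation {X Y : Type*} [MetricSpace X] [MetricSpace Y] (R ε : ℝ) (f : X → Y) : Prop :=
  ∀ x y, dist x y ≤ R → dist (f x) (f y) < ε

/-- `g` is a coarse embedding. -/
def CoarseEmbedding {X Y : Type*} [MetricSpace X] [MetricSpace Y] (g : X → Y) : Prop :=
  ∃ ρminus ρplus : ℝ → ℝ, Monotone ρminus ∧ Monotone ρplus ∧
    Filter.Tendsto ρminus Filter.atTop Filter.atTop ∧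
    ∀ x y, ρminus (dist x y) ≤ dist (g x) (g y) ∧ dist (g x) (g y) ≤ ρplus (dist x y)

/-- `X` has bounded geometry: balls of any fixed radius have uniformly bounded cardinality. -/
def BoundedGeometry (X : Type*) [MetricSpace X] : Prop :=
  ∀ r : ℝ, 0 < r → ∃ N : ℕ, ∀ x : X, (Metric.ball x r).encard ≤ N

/-- for nonempty finite sets `C, D` with `|C| ≥ |D|`,
`Σ_z |1_C(z)/|C| − 1_D(z)/|D|| ≤ 2·|C Δ D|/|D|`. -/
theorem normalized_indicator_diff_le {Z : Type u} [DecidableEq Z]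
    (C D : Finset Z) (hC : C.Nonempty) (hD : D.Nonempty)
    (hcard : D.card ≤ C.card) :
    ∑' z : Z,
        |(if z ∈ C then (1 : ℝ) else 0) / C.card - (if z ∈ D then (1 : ℝ) else 0) / D.card|
      ≤ 2 * (symmDiff C D).card / D.card := by
  classical
  have hc : (0:ℝ) < C.card := by exact_mod_cast hC.card_pos
  have hd : (0:ℝ) < D.card := by exact_mod_cast hD.card_pos
  have hdc : (D.card:ℝ) ≤ C.card := by exact_mod_cast hcard
  have h1 : (1:ℝ) / C.card ≤ 1 / D.card := one_div_le_one_div_of_le hd hdc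
  set f : Z → ℝ := fun z =>
    |(if z ∈ C then (1 : ℝ) else 0) / C.card - (if z ∈ D then (1 : ℝ) else 0) / D.card| with hf
  have htsum : ∑' z : Z, f z = ∑ z ∈ C ∪ D, f z := by
    refine tsum_eq_sum ?_
    intro z hz
    simp only [Finset.mem_union, not_or] at hz
    simp [hf, hz.1, hz.2]
  show ∑' z : Z, f z ≤ _
  rw [htsum]
  have hbound : ∀ z ∈ C ∪ D, f z ≤
      (if z ∈ C then (1:ℝ) else 0) * (1 / D.card - 1 / C.card)
        + (if z ∈ symmDiff C D then (1:ℝ) else 0) / D.card := by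
    intro z _
    by_cases hzC : z ∈ C <;> by_cases hzD : z ∈ D
    · have hs : z ∉ symmDiff C D := by simp [Finset.mem_symmDiff, hzC, hzD]
      simp only [hf, hzC, hzD, if_true, if_neg hs]
      rw [abs_of_nonpos (by linarith [h1])]
      ring_nf
      linarith
    · have hs : z ∈ symmDiff C D := by simp [Finset.mem_symmDiff, hzC, hzD]
      simp only [hf, hzC, hzD, if_true, if_false, if_pos hs]
      rw [zero_div, sub_zero, abs_of_nonneg (by positivity)]
      linarith
    · have hs : z ∈ symmDiff C D := by simp [Finset.mem_symmDiff, hzC, hzD]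
      simp only [hf, hzC, hzD, if_true, if_false, if_pos hs]
      rw [zero_div, zero_sub, abs_neg, abs_of_nonneg (by positivity)]
      linarith
    · have hs : z ∉ symmDiff C D := by simp [Finset.mem_symmDiff, hzC, hzD]
      simp [hf, hzC, hzD, hs]
  refine (Finset.sum_le_sum hbound).trans ?_
  rw [Finset.sum_add_distrib]
  have hsum1 : ∑ z ∈ C ∪ D, (if z ∈ C then (1:ℝ) else 0) * (1 / D.card - 1 / C.card)
      = C.card * (1 / D.card - 1 / C.card) := by
    simp_rw [ite_mul, one_mul, zero_mul]
    rw [← Finset.sum_filter]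
    have : (C ∪ D).filter (· ∈ C) = C := by
      ext z; simp [Finset.mem_filter]
    rw [this, Finset.sum_const, nsmul_eq_mul]
  have hsub : symmDiff C D ⊆ C ∪ D := by
    intro z hz
    simp only [Finset.mem_symmDiff] at hz
    simp only [Finset.mem_union]; tauto
  have hsum2 : ∑ z ∈ C ∪ D, (if z ∈ symmDiff C D then (1:ℝ) else 0) / D.card
      = (symmDiff C D).card / D.card := by
    simp_rw [div_eq_mul_inv, ite_mul, one_mul, zero_mul]
    rw [← Finset.sum_filter]
    have : (C ∪ D).filter (· ∈ symmDiff C D) = symmDiff C D := by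
      ext z; simp only [Finset.mem_filter]
      exact ⟨fun h => h.2, fun h => ⟨hsub h, h⟩⟩
    rw [this, Finset.sum_const, nsmul_eq_mul]
  rw [hsum1, hsum2]
  have hk : (C.card : ℝ) - D.card ≤ (symmDiff C D).card := by
    have h2 : C.card ≤ (C \ D).card + D.card := Finset.card_le_card_sdiff_add_card
    have h3 : (C \ D).card ≤ (symmDiff C D).card := by
      refine Finset.card_le_card ?_
      intro z hz
      simp only [Finset.mem_sdiff] at hz
      simp [Finset.mem_symmDiff, hz.1, hz.2]
    have : C.card ≤ (symmDiff C D).card + D.card := h2.trans (by omega)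
    have := (Nat.cast_le (α := ℝ)).2 this
    push_cast at this
    linarith
  have heq : (C.card:ℝ) * (1 / D.card - 1 / C.card) + (symmDiff C D).card / D.card
      = ((C.card:ℝ) - D.card + (symmDiff C D).card) / D.card := by
    field_simp
  rw [heq]
  rw [div_le_div_iff₀ hd hd]
  nlinarith

end
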